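/- Let $L$ be a field, $V$ a finite-dimensional filtered $L$-vector space with a decreasing exhaustive separated filtration $(\mathrm{Fil}^i V)_{i \in \mathbb{Z}}$, and $W \subset V$ a subspace. Say $W$ is non-critical if there exists $j \in \mathbb{Z}$ with $V = W \oplus \mathrm{Fil}^j V$. Suppose the filtration of $V$ has $n = \dim V$ distinct jumps $k_1 < k_2 < \dots < k_n$ (i.e. $\dim \mathrm{gr}^{k_i} V = 1$ for each $i$ and $\mathrm{gr}^k V = 0$ otherwise). Let $0 = F_0 \subset F_1 \subset \dots \subset F_n = V$ be a complete flag such that every $F_i$ is non-critical. Then for each $i$, the induced filtration on $F_i$ has jumps exactly $k_1, \dots, k_i$, and the induced filtration on $V/F_i$ has jumps exactly $k_{i+1}, \dots, k_n$. -/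

import Mathlib

open Module

/-- Let `V` be a filtered vector space whose (decreasing, exhaustive,
separated) filtration has `n = dim V` distinct jumps `k_1 < … < k_n`, each of
multiplicity one.  If `0 = F_0 ⊂ F_1 ⊂ … ⊂ F_n = V` is a complete flag all of whose
members are non-critical (admit a filtration step as complement), then the filtration
induced on each `F_i` has jumps exactly `k_1, …, k_i` and the filtration induced on
`V/F_i` has jumps exactly `k_{i+1}, …, k_n`. -/
theorem stmt_12 {k : Type*} [Field k] {V : Type*} [AddCommGroup V] [Module k V]
    [FiniteDimensional k V] {n : ℕ} (hn : Module.finrank k V = n)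
    (Fil : ℤ → Submodule k V) (hanti : Antitone Fil)
    (hexh : ∃ a : ℤ, Fil a = ⊤) (hsep : ∃ b : ℤ, Fil b = ⊥)
    (kk : Fin n → ℤ) (hkk : StrictMono kk)
    (hjump : ∀ i : Fin n,
      Module.finrank k (Fil (kk i)) = Module.finrank k (Fil (kk i + 1)) + 1)
    (hnojump : ∀ m : ℤ, (∀ i : Fin n, m ≠ kk i) → Fil m = Fil (m + 1))
    (F : Fin (n + 1) → Submodule k V) (hFmono : Monotone F)
    (hFrank : ∀ i : Fin (n + 1), Module.finrank k (F i) = (i : ℕ))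
    (hFnc : ∀ i : Fin (n + 1), ∃ j : ℤ, IsCompl (F i) (Fil j)) :
    (∀ i : Fin (n + 1), ∀ t : Fin n, (t : ℕ) < (i : ℕ) →
      Module.finrank k ↥(F i ⊓ Fil (kk t)) =
        Module.finrank k ↥(F i ⊓ Fil (kk t + 1)) + 1) ∧
    (∀ i : Fin (n + 1), ∀ m : ℤ, (∀ t : Fin n, (t : ℕ) < (i : ℕ) → m ≠ kk t) →
      Module.finrank k ↥(F i ⊓ Fil m) = Module.finrank k ↥(F i ⊓ Fil (m + 1))) ∧
    (∀ i : Fin (n + 1), ∀ t : Fin n, (i : ℕ) ≤ (t : ℕ) →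
      Module.finrank k ↥((Fil (kk t)).map (F i).mkQ) =
        Module.finrank k ↥((Fil (kk t + 1)).map (F i).mkQ) + 1) ∧
    (∀ i : Fin (n + 1), ∀ m : ℤ, (∀ t : Fin n, (i : ℕ) ≤ (t : ℕ) → m ≠ kk t) →
      Module.finrank k ↥((Fil m).map (F i).mkQ) =
        Module.finrank k ↥((Fil (m + 1)).map (F i).mkQ)) := by
  -- a gap with no jumps does not change the filtration
  have gap : ∀ c : ℕ, ∀ m : ℤ,
      (∀ x : ℤ, m ≤ x → x < m + c → ∀ t : Fin n, x ≠ kk t) → Fil m = Fil (m + c) := by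
    intro c
    induction c with
    | zero => intro m _; simp
    | succ c ih =>
      intro m hm
      have h1 : Fil m = Fil (m + 1) := hnojump m (fun t => hm m le_rfl (by omega) t)
      have h2 := ih (m + 1) (fun x hx hx' t => hm x (by omega) (by push_cast; push_cast at hx'; omega) t)
      rw [h1, h2]
      congr 1
      push_cast
      ring
  -- successor of a jump reaches the next jump
  have hksucc : ∀ (t : Fin n) (ht : (t : ℕ) + 1 < n),
      Fil (kk t + 1) = Fil (kk ⟨(t : ℕ) + 1, ht⟩) := by
    intro t ht
    have hlt : kk t < kk ⟨(t : ℕ) + 1, ht⟩ := hkk (by simp [Fin.lt_def])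
    have hcond : ∀ x : ℤ, kk t + 1 ≤ x →
        x < kk t + 1 + ((kk ⟨(t : ℕ) + 1, ht⟩ - (kk t + 1)).toNat : ℤ) →
        ∀ s : Fin n, x ≠ kk s := by
      intro x hx hx' s hxs
      subst hxs
      have h1 : (t : Fin n) < s := by
        rw [← hkk.lt_iff_lt]; omega
      have h2 : s < (⟨(t : ℕ) + 1, ht⟩ : Fin n) := by
        rw [← hkk.lt_iff_lt]; omega
      rw [Fin.lt_def] at h1 h2
      simp at h2
      omega
    have := gap (kk ⟨(t : ℕ) + 1, ht⟩ - (kk t + 1)).toNat (kk t + 1) hcond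
    rw [this]
    congr 1
    omega
  -- after the last jump the filtration is trivial
  have hbot : ∀ t : Fin n, (t : ℕ) + 1 = n → Fil (kk t + 1) = ⊥ := by
    intro t ht
    obtain ⟨b, hb⟩ := hsep
    rcases le_total b (kk t + 1) with h | h
    · exact le_bot_iff.mp (hb ▸ hanti h)
    · have hcond : ∀ x : ℤ, kk t + 1 ≤ x →
          x < kk t + 1 + ((b - (kk t + 1)).toNat : ℤ) → ∀ s : Fin n, x ≠ kk s := by
        intro x hx _ s hxs
        have hs : kk s ≤ kk t := by
          have : s ≤ t := by
            rw [Fin.le_def]; omega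
          exact hkk.monotone this
        omega
      have := gap (b - (kk t + 1)).toNat (kk t + 1) hcond
      rw [this]
      have he : kk t + 1 + ((b - (kk t + 1)).toNat : ℤ) = b := by omega
      rw [he, hb]
  -- ranks of the filtration steps
  have hrank1 : ∀ t : Fin n, finrank k (Fil (kk t + 1)) + ((t : ℕ) + 1) = n := by
    suffices h : ∀ d : ℕ, ∀ t : Fin n, (t : ℕ) + 1 + d = n →
        finrank k (Fil (kk t + 1)) + ((t : ℕ) + 1) = n by
      intro t
      exact h (n - ((t : ℕ) + 1)) t (by omega)
    intro d
    induction d with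
    | zero =>
      intro t ht
      rw [hbot t (by omega)]
      simp [finrank_bot]
      omega
    | succ d ih =>
      intro t ht
      have ht1 : (t : ℕ) + 1 < n := by omega
      have e := hksucc t ht1
      have e2 := hjump ⟨(t : ℕ) + 1, ht1⟩
      have e3 := ih ⟨(t : ℕ) + 1, ht1⟩ (by simp; omega)
      simp at e3
      rw [e]
      omega
  have hrank0 : ∀ t : Fin n, finrank k (Fil (kk t)) + (t : ℕ) = n := by
    intro t
    have := hjump t
    have := hrank1 t
    omega
  -- the canonical complement of `F i`
  have hcompl : ∀ (i : Fin (n + 1)) (hi : (i : ℕ) < n),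
      IsCompl (F i) (Fil (kk ⟨(i : ℕ), hi⟩)) := by
    intro i hi
    obtain ⟨j, hc⟩ := hFnc i
    have hadd : finrank k (F i) + finrank k (Fil j) = n := by
      have h1 := Submodule.finrank_sup_add_finrank_inf_eq (F i) (Fil j)
      rw [hc.sup_eq_top, hc.inf_eq_bot, finrank_top, hn, finrank_bot] at h1
      omega
    have hr0 := hrank0 ⟨(i : ℕ), hi⟩
    simp only [] at hr0
    have hFi := hFrank i
    have hji : finrank k (Fil j) = finrank k (Fil (kk ⟨(i : ℕ), hi⟩)) := by omega
    have heq : Fil j = Fil (kk ⟨(i : ℕ), hi⟩) := by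
      rcases le_total j (kk ⟨(i : ℕ), hi⟩) with h | h
      · exact (Submodule.eq_of_le_of_finrank_le (hanti h) hji.le).symm
      · exact Submodule.eq_of_le_of_finrank_le (hanti h) hji.ge
    rw [← heq]
    exact hc
  -- rank of the image in the quotient
  have hmap : ∀ p S : Submodule k V,
      finrank k ↥(S.map p.mkQ) + finrank k ↥(p ⊓ S) = finrank k ↥S := by
    intro p S
    have h1 := LinearMap.finrank_range_add_finrank_ker (p.mkQ.comp S.subtype)
    rw [LinearMap.range_comp, Submodule.range_subtype, LinearMap.ker_comp,
      Submodule.ker_mkQ] at h1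
    have h2 : finrank k ↥(Submodule.comap S.subtype p) = finrank k ↥(S ⊓ p) := by
      rw [← Submodule.map_comap_subtype]
      exact (Submodule.finrank_map_subtype_eq S _).symm
    rw [h2, inf_comm] at h1
    exact h1
  -- rank of the intersection, for `m ≤ kk i`
  have hinf : ∀ (i : Fin (n + 1)) (hi : (i : ℕ) < n) (m : ℤ), m ≤ kk ⟨(i : ℕ), hi⟩ →
      finrank k ↥(F i ⊓ Fil m) + n = (i : ℕ) + finrank k (Fil m) := by
    intro i hi m hm
    have hsup : F i ⊔ Fil m = ⊤ := by
      refine eq_top_iff.mpr ?_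
      calc (⊤ : Submodule k V) = F i ⊔ Fil (kk ⟨(i : ℕ), hi⟩) := (hcompl i hi).sup_eq_top.symm
        _ ≤ F i ⊔ Fil m := sup_le_sup_left (hanti hm) _
    have h1 := Submodule.finrank_sup_add_finrank_inf_eq (F i) (Fil m)
    rw [hsup, finrank_top, hn, hFrank] at h1
    omega
  -- triviality of the intersection, for `kk i ≤ m`
  have hinf0 : ∀ (i : Fin (n + 1)) (hi : (i : ℕ) < n) (m : ℤ), kk ⟨(i : ℕ), hi⟩ ≤ m →
      F i ⊓ Fil m = ⊥ := by
    intro i hi m hm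
    refine le_bot_iff.mp ?_
    calc F i ⊓ Fil m ≤ F i ⊓ Fil (kk ⟨(i : ℕ), hi⟩) := inf_le_inf_left _ (hanti hm)
      _ = ⊥ := (hcompl i hi).inf_eq_bot
  refine ⟨?_, ?_, ?_, ?_⟩
  · -- jumps of the subobject
    intro i t hti
    rcases lt_or_ge (i : ℕ) n with hi | hi
    · have hlt : kk t < kk ⟨(i : ℕ), hi⟩ := hkk (by rw [Fin.lt_def]; exact hti)
      have h1 := hinf i hi (kk t) (by omega)
      have h2 := hinf i hi (kk t + 1) (by omega)
      have h3 := hjump t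
      omega
    · have hFtop : F i = ⊤ := Submodule.eq_top_of_finrank_eq (by
        rw [hFrank, hn]; omega)
      rw [hFtop, top_inf_eq, top_inf_eq]
      exact hjump t
  · -- no other jumps of the subobject
    intro i m hm
    by_cases hex : ∃ t : Fin n, m = kk t
    · obtain ⟨t, rfl⟩ := hex
      have hit : (i : ℕ) ≤ (t : ℕ) := le_of_not_gt fun h => hm t h rfl
      have hi : (i : ℕ) < n := lt_of_le_of_lt hit t.isLt
      have hk1 : kk ⟨(i : ℕ), hi⟩ ≤ kk t := hkk.monotone (by rw [Fin.le_def]; exact hit)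
      have e1 : F i ⊓ Fil (kk t) = ⊥ := hinf0 i hi _ hk1
      have e2 : F i ⊓ Fil (kk t + 1) = ⊥ := hinf0 i hi _ (by omega)
      rw [e1, e2]
    · push_neg at hex
      rw [hnojump m hex]
  · -- jumps of the quotient
    intro i t hit
    have hi : (i : ℕ) < n := lt_of_le_of_lt hit t.isLt
    have hk1 : kk ⟨(i : ℕ), hi⟩ ≤ kk t := hkk.monotone (by rw [Fin.le_def]; exact hit)
    have e1 : F i ⊓ Fil (kk t) = ⊥ := hinf0 i hi _ hk1
    have e2 : F i ⊓ Fil (kk t + 1) = ⊥ := hinf0 i hi _ (by omega)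
    have m1 := hmap (F i) (Fil (kk t))
    have m2 := hmap (F i) (Fil (kk t + 1))
    rw [e1, finrank_bot] at m1
    rw [e2, finrank_bot] at m2
    have h3 := hjump t
    omega
  · -- no other jumps of the quotient
    intro i m hm
    by_cases hex : ∃ t : Fin n, m = kk t
    · obtain ⟨t, rfl⟩ := hex
      have hti : (t : ℕ) < (i : ℕ) := lt_of_not_ge fun h => hm t h rfl
      rcases lt_or_ge (i : ℕ) n with hi | hi
      · have hlt : kk t < kk ⟨(i : ℕ), hi⟩ := hkk (by rw [Fin.lt_def]; exact hti)
        have h1 := hinf i hi (kk t) (by omega)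
        have h2 := hinf i hi (kk t + 1) (by omega)
        have m1 := hmap (F i) (Fil (kk t))
        have m2 := hmap (F i) (Fil (kk t + 1))
        have h3 := hjump t
        omega
      · have hFtop : F i = ⊤ := Submodule.eq_top_of_finrank_eq (by
          rw [hFrank, hn]; omega)
        haveI : Subsingleton (V ⧸ F i) :=
          (Submodule.Quotient.subsingleton_iff).mpr hFtop
        rw [Module.finrank_zero_of_subsingleton, Module.finrank_zero_of_subsingleton]
    · push_neg at hex
      rw [hnojump m hex]
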